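/- Let g ∈ ℂ[x,y] be reduced, and ∂_1 = α_1∂_x + β_1∂_y, ∂_2 = α_2∂_x + β_2∂_y two elements of Der(g). Then the determinant α_1·β_2 − α_2·β_1 is divisible by g in ℂ[x,y]. -/

import Mathlib

open MvPolynomial

noncomputable section

/-- `Der(g)`, the module of derivations `α ∂_x + β ∂_y` of `ℂ[x,y]` preserving the
principal ideal `(g)`, identified with pairs `(α, β)`. -/
def Derg (g : MvPolynomial (Fin 2) ℂ) :
    Submodule (MvPolynomial (Fin 2) ℂ)
      (MvPolynomial (Fin 2) ℂ × MvPolynomial (Fin 2) ℂ) where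
  carrier := {q | q.1 * pderiv (0 : Fin 2) g + q.2 * pderiv (1 : Fin 2) g ∈ Ideal.span {g}}
  add_mem' := by
    intro a b ha hb
    simp only [Set.mem_setOf_eq, Prod.fst_add, Prod.snd_add] at *
    have : (a.1 + b.1) * pderiv (0 : Fin 2) g + (a.2 + b.2) * pderiv (1 : Fin 2) g =
        (a.1 * pderiv (0 : Fin 2) g + a.2 * pderiv (1 : Fin 2) g) +
        (b.1 * pderiv (0 : Fin 2) g + b.2 * pderiv (1 : Fin 2) g) := by ring
    rw [this]; exact Ideal.add_mem _ ha hb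
  zero_mem' := by simp
  smul_mem' := by
    intro c a ha
    simp only [Set.mem_setOf_eq, Prod.smul_fst, Prod.smul_snd, smul_eq_mul] at *
    have : c * a.1 * pderiv (0 : Fin 2) g + c * a.2 * pderiv (1 : Fin 2) g =
        c * (a.1 * pderiv (0 : Fin 2) g + a.2 * pderiv (1 : Fin 2) g) := by ring
    rw [this]; exact Ideal.mul_mem_left _ _ ha

lemma coeff_pderiv' {σ : Type*} [DecidableEq σ] (i : σ) (f : MvPolynomial σ ℂ) (m : σ →₀ ℕ) :
    coeff m (pderiv i f) = ((m i : ℂ) + 1) * coeff (m + Finsupp.single i 1) f := by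
  induction f using MvPolynomial.induction_on' with
  | monomial s a =>
    rw [pderiv_monomial, coeff_monomial, coeff_monomial]
    by_cases h2 : s = m + Finsupp.single i 1
    · have hsi : s i = m i + 1 := by simp [h2]
      have h1 : s - Finsupp.single i 1 = m := by
        rw [h2]; exact add_tsub_cancel_right _ _
      rw [if_pos h1, if_pos h2, hsi]
      push_cast; ring
    · rw [if_neg h2, mul_zero]
      by_cases h1 : s - Finsupp.single i 1 = m
      · have hsi : s i = 0 := by
          by_contra hs
          apply h2
          ext j
          have hth := congrArg (fun t => t j) h1
          simp only [Finsupp.tsub_apply, Finsupp.single_apply, Finsupp.add_apply] at hth ⊢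
          by_cases hij : i = j
          · subst hij; simp at hth ⊢; omega
          · simp only [if_neg hij] at hth ⊢; omega
        rw [if_pos h1, hsi]; simp
      · rw [if_neg h1]
  | add p q hp hq =>
    simp only [map_add, coeff_add, hp, hq]; ring

lemma degreeOf_pderiv_lt' {σ : Type*} [DecidableEq σ] (i : σ) (f : MvPolynomial σ ℂ)
    (h : pderiv i f ≠ 0) : degreeOf i (pderiv i f) < degreeOf i f := by
  have key : ∀ m : σ →₀ ℕ, m ∈ (pderiv i f).support → m i + 1 ≤ degreeOf i f := by
    intro m hm
    rw [mem_support_iff, coeff_pderiv'] at hm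
    have hc : coeff (m + Finsupp.single i 1) f ≠ 0 := by
      intro h0; rw [h0, mul_zero] at hm; exact hm rfl
    have := monomial_le_degreeOf i (mem_support_iff.mpr hc)
    simpa using this
  obtain ⟨m, hm⟩ := support_nonempty.mpr h
  have hpos : 0 < degreeOf i f := lt_of_lt_of_le (Nat.succ_pos _) (key m hm)
  rw [degreeOf_lt_iff hpos]
  intro m' hm'
  exact lt_of_lt_of_le (Nat.lt_succ_self _) (key m' hm')

lemma degreeOf_eq_zero_of_pderiv_eq_zero' {σ : Type*} [DecidableEq σ] (i : σ)
    (f : MvPolynomial σ ℂ) (h : pderiv i f = 0) : degreeOf i f = 0 := by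
  refine Nat.eq_zero_of_le_zero (degreeOf_le_iff.mpr ?_)
  intro m hm
  by_contra hmi
  set k : σ →₀ ℕ := m - Finsupp.single i 1 with hk
  have hme : k + Finsupp.single i 1 = m := by
    ext j
    simp only [hk, Finsupp.add_apply, Finsupp.tsub_apply, Finsupp.single_apply]
    by_cases hij : i = j
    · subst hij; simp; omega
    · simp only [if_neg hij]; omega
  have hco := coeff_pderiv' i f k
  rw [h, hme] at hco
  simp only [coeff_zero] at hco
  have hne : ((k i : ℂ) + 1) ≠ 0 := by
    exact_mod_cast Nat.succ_ne_zero (k i)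
  rcases mul_eq_zero.mp hco.symm with h' | h'
  · exact hne h'
  · exact mem_support_iff.mp hm h'

lemma degreeOf_mul_fin2 (i : Fin 2) (f g : MvPolynomial (Fin 2) ℂ) (hf : f ≠ 0) (hg : g ≠ 0) :
    degreeOf i (f * g) = degreeOf i f + degreeOf i g := by
  have base : ∀ f g : MvPolynomial (Fin 2) ℂ, f ≠ 0 → g ≠ 0 →
      degreeOf (0 : Fin 2) (f * g) = degreeOf 0 f + degreeOf 0 g := by
    intro f g hf hg
    have hf' : finSuccEquiv ℂ 1 f ≠ 0 := fun h0 => hf (by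
      have := congrArg (finSuccEquiv ℂ 1).symm h0
      simpa using this)
    have hg' : finSuccEquiv ℂ 1 g ≠ 0 := fun h0 => hg (by
      have := congrArg (finSuccEquiv ℂ 1).symm h0
      simpa using this)
    rw [← natDegree_finSuccEquiv, ← natDegree_finSuccEquiv, ← natDegree_finSuccEquiv, map_mul,
      Polynomial.natDegree_mul hf' hg']
  have hinj : Function.Injective (Equiv.swap (0 : Fin 2) i) := Equiv.injective _
  have hrw : ∀ p : MvPolynomial (Fin 2) ℂ,
      degreeOf i p = degreeOf 0 (rename (Equiv.swap (0 : Fin 2) i) p) := by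
    intro p
    have := degreeOf_rename_of_injective (p := p) hinj i
    rw [Equiv.swap_apply_right] at this
    exact this.symm
  have hrn : ∀ p : MvPolynomial (Fin 2) ℂ, p ≠ 0 →
      rename (Equiv.swap (0 : Fin 2) i) p ≠ 0 := by
    intro p hp
    exact fun h0 => hp (rename_injective _ hinj (by simpa using h0))
  rw [hrw, hrw, hrw, map_mul]
  exact base _ _ (hrn f hf) (hrn g hg)

lemma pderiv_eq_zero_of_self_dvd (i : Fin 2) (p : MvPolynomial (Fin 2) ℂ) (hp : p ≠ 0)
    (hd : p ∣ pderiv i p) : pderiv i p = 0 := by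
  by_contra h
  obtain ⟨c, hc⟩ := hd
  have hc0 : c ≠ 0 := by rintro rfl; rw [mul_zero] at hc; exact h hc
  have h1 := degreeOf_pderiv_lt' i p h
  rw [hc, degreeOf_mul_fin2 i p c hp hc0] at h1
  omega

lemma squarefree_dvd_of_prime_dvd {M : Type*} [CommMonoidWithZero M]
    [Nontrivial M] [UniqueFactorizationMonoid M] {g d : M} (hg : Squarefree g)
    (H : ∀ p : M, Prime p → p ∣ g → p ∣ d) : g ∣ d := by
  have key : ∀ g : M, Squarefree g → (∀ p : M, Prime p → p ∣ g → p ∣ d) → g ∣ d := by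
    intro g
    induction g using UniqueFactorizationMonoid.induction_on_prime with
    | h₁ => intro hsq _; exact absurd hsq not_squarefree_zero
    | h₂ x hx => intro _ _; exact hx.dvd
    | h₃ a p ha hp ih =>
      intro hsq H
      have hpa : ¬ p ∣ a := fun hdvd =>
        hp.not_unit (hsq p (mul_dvd_mul_left p hdvd))
      have hpd : p ∣ d := H p hp (dvd_mul_right p a)
      have had : a ∣ d := ih hsq.of_mul_right
        (fun q hq hqa => H q hq (hqa.mul_left p))
      obtain ⟨e, he⟩ := had
      have hpe : p ∣ e := (hp.dvd_or_dvd (he ▸ hpd)).resolve_left hpa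
      obtain ⟨f, rfl⟩ := hpe
      exact ⟨f, by rw [he, ← mul_assoc, mul_comm a p]⟩
  exact key g hg H

/-- Let `g ∈ ℂ[x,y]` be reduced (squarefree), and
`∂_1 = α_1∂_x + β_1∂_y`, `∂_2 = α_2∂_x + β_2∂_y` two elements of `Der(g)`.
Then `g` divides the determinant `α_1·β_2 − α_2·β_1`. -/
theorem g_dvd_det (g : MvPolynomial (Fin 2) ℂ) (hg : Squarefree g)
    (α₁ β₁ α₂ β₂ : MvPolynomial (Fin 2) ℂ)
    (h₁ : (α₁, β₁) ∈ Derg g) (h₂ : (α₂, β₂) ∈ Derg g) :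
    g ∣ α₁ * β₂ - α₂ * β₁ := by
  set gx := pderiv (0 : Fin 2) g with hgx
  set gy := pderiv (1 : Fin 2) g with hgy
  obtain ⟨a, ha⟩ := (Ideal.mem_span_singleton).mp h₁
  obtain ⟨b, hb⟩ := (Ideal.mem_span_singleton).mp h₂
  have hdx : (α₁ * β₂ - α₂ * β₁) * gx = g * (a * β₂ - b * β₁) := by
    linear_combination β₂ * ha - β₁ * hb
  have hdy : (α₁ * β₂ - α₂ * β₁) * gy = g * (b * α₁ - a * α₂) := by
    linear_combination α₁ * hb - α₂ * ha
  refine squarefree_dvd_of_prime_dvd hg ?_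
  intro p hp hpg
  by_contra hpd
  have hpgx : p ∣ gx := by
    have : p ∣ (α₁ * β₂ - α₂ * β₁) * gx := hpg.trans ⟨_, hdx⟩
    exact (hp.dvd_or_dvd this).resolve_left hpd
  have hpgy : p ∣ gy := by
    have : p ∣ (α₁ * β₂ - α₂ * β₁) * gy := hpg.trans ⟨_, hdy⟩
    exact (hp.dvd_or_dvd this).resolve_left hpd
  obtain ⟨h, hh⟩ := hpg
  have hph : ¬ p ∣ h := fun hd =>
    hp.not_unit (hg p (by rw [hh]; exact mul_dvd_mul_left p hd))
  have key : ∀ i : Fin 2, p ∣ pderiv i g → pderiv i p = 0 := by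
    intro i hi
    rw [hh, pderiv_mul] at hi
    have h2 : p ∣ p * pderiv i h := dvd_mul_right _ _
    have h3 : p ∣ pderiv i p * h := by
      have := dvd_sub hi h2
      simpa using this
    exact pderiv_eq_zero_of_self_dvd i p hp.ne_zero
      ((hp.dvd_or_dvd h3).resolve_right hph)
  have hd0 : degreeOf (0 : Fin 2) p = 0 :=
    degreeOf_eq_zero_of_pderiv_eq_zero' _ _ (key 0 hpgx)
  have hd1 : degreeOf (1 : Fin 2) p = 0 :=
    degreeOf_eq_zero_of_pderiv_eq_zero' _ _ (key 1 hpgy)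
  have hpC : p = C (coeff 0 p) := by
    ext m
    rcases eq_or_ne m 0 with rfl | hm
    · simp [coeff_C]
    · rw [coeff_C, if_neg (Ne.symm hm)]
      by_contra hc
      have hmem : m ∈ p.support := mem_support_iff.mpr hc
      have h0' : m 0 ≤ 0 := hd0 ▸ monomial_le_degreeOf 0 hmem
      have h1' : m 1 ≤ 0 := hd1 ▸ monomial_le_degreeOf 1 hmem
      apply hm
      ext j
      fin_cases j
      · simpa using h0'
      · simpa using h1'
  have hc0 : coeff 0 p ≠ 0 := by
    intro h0
    rw [h0, map_zero] at hpC
    exact hp.ne_zero hpC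
  exact hp.not_unit (hpC ▸ (isUnit_iff_ne_zero.mpr hc0).map C)
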